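/- Let α, β, γ : (0, ∞) → ℝ be continuously differentiable functions satisfying the ideal scaling conditions β̇_t = 2α̇_t + e^{α_t} and γ̇_t = −α̇_t + e^{α_t} for all t > 0. Let τ : (0, ∞) → (0, ∞) be twice continuously differentiable and strictly increasing with τ̇(t) > 0, and define α^{(τ)}_t = α_{τ(t)} + log τ̇(t), β^{(τ)}_t = β_{τ(t)} + 2 log τ̇(t), and γ^{(τ)}_t = γ_{τ(t)} − log τ̇(t). Then α^{(τ)}, β^{(τ)}, γ^{(τ)} also satisfy the ideal scaling conditions: d/dt β^{(τ)}_t = 2 d/dt α^{(τ)}_t + e^{α^{(τ)}_t} and d/dt γ^{(τ)}_t = −d/dt α^{(τ)}_t + e^{α^{(τ)}_t} for all t > 0. -/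

import Mathlib

open Real Set

noncomputable section

theorem ideal_scaling_closed_under_time_dilation
    (α β γ α' β' γ' : ℝ → ℝ)
    (hα : ∀ t ∈ Set.Ioi (0 : ℝ), HasDerivAt α (α' t) t)
    (hβ : ∀ t ∈ Set.Ioi (0 : ℝ), HasDerivAt β (β' t) t)
    (hγ : ∀ t ∈ Set.Ioi (0 : ℝ), HasDerivAt γ (γ' t) t)
    (hα'c : ContinuousOn α' (Set.Ioi 0)) (hβ'c : ContinuousOn β' (Set.Ioi 0))
    (hγ'c : ContinuousOn γ' (Set.Ioi 0))
    (hideal₁ : ∀ t ∈ Set.Ioi (0 : ℝ), β' t = 2 * α' t + Real.exp (α t))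
    (hideal₂ : ∀ t ∈ Set.Ioi (0 : ℝ), γ' t = -α' t + Real.exp (α t))
    (τ τ' τ'' : ℝ → ℝ)
    (hτpos : ∀ t ∈ Set.Ioi (0 : ℝ), 0 < τ t)
    (hτmono : StrictMonoOn τ (Set.Ioi 0))
    (hτ : ∀ t ∈ Set.Ioi (0 : ℝ), HasDerivAt τ (τ' t) t)
    (hτ' : ∀ t ∈ Set.Ioi (0 : ℝ), HasDerivAt τ' (τ'' t) t)
    (hτ'pos : ∀ t ∈ Set.Ioi (0 : ℝ), 0 < τ' t) :
    ∀ t ∈ Set.Ioi (0 : ℝ), ∃ A' B' G' : ℝ,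
      HasDerivAt (fun s : ℝ => α (τ s) + Real.log (τ' s)) A' t ∧
      HasDerivAt (fun s : ℝ => β (τ s) + 2 * Real.log (τ' s)) B' t ∧
      HasDerivAt (fun s : ℝ => γ (τ s) - Real.log (τ' s)) G' t ∧
      B' = 2 * A' + Real.exp (α (τ t) + Real.log (τ' t)) ∧
      G' = -A' + Real.exp (α (τ t) + Real.log (τ' t)) := by

  intro t ht
  have htτ : τ t ∈ Set.Ioi (0 : ℝ) := hτpos t ht
  have hτ'ne : τ' t ≠ 0 := ne_of_gt (hτ'pos t ht)
  have hατ : HasDerivAt (fun s => α (τ s)) (α' (τ t) * τ' t) t :=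
    (hα (τ t) htτ).comp t (hτ t ht)
  have hβτ : HasDerivAt (fun s => β (τ s)) (β' (τ t) * τ' t) t :=
    (hβ (τ t) htτ).comp t (hτ t ht)
  have hγτ : HasDerivAt (fun s => γ (τ s)) (γ' (τ t) * τ' t) t :=
    (hγ (τ t) htτ).comp t (hτ t ht)
  have hlog : HasDerivAt (fun s => Real.log (τ' s)) (τ'' t / τ' t) t := by
    have := (Real.hasDerivAt_log hτ'ne).comp t (hτ' t ht)
    simpa [div_eq_inv_mul, Function.comp_def] using this
  refine ⟨α' (τ t) * τ' t + τ'' t / τ' t,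
    β' (τ t) * τ' t + 2 * (τ'' t / τ' t),
    γ' (τ t) * τ' t - τ'' t / τ' t,
    hατ.add hlog, hβτ.add (hlog.const_mul 2), hγτ.sub hlog, ?_, ?_⟩ <;>
  · rw [Real.exp_add, Real.exp_log (hτ'pos t ht)]
    first
      | rw [hideal₁ (τ t) htτ]
      | rw [hideal₂ (τ t) htτ]
    ring
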